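/- Fix k ≥ 1. The minimum value of n for which the path graph P_n admits a burning sequence with exactly k sources whose burning is a burning homomorphism equals 3k − 2: the path graph P_{3k−2} admits such a burning sequence, and no path graph P_n with n < 3k − 2 does. -/

import Mathlib

open SimpleGraph

/-- The path graph `P_n` with vertices `1, …, n` (represented by `Fin n`,
vertex `i+1` corresponds to index `i`) and edges `{i, i+1}`. -/
def pathG (n : ℕ) : SimpleGraph (Fin n) where
  Adj v w := v.val + 1 = w.val ∨ w.val + 1 = v.val
  symm := ⟨by intro v w h; tauto⟩
  loopless := ⟨by intro v h; rcases h with h | h <;> omega⟩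

/-- `(s 0, …, s (k-1))` is a burning sequence of `G` (written `1`-based in the paper:
`d(v_i, v_j) ≥ j - i + 1` for `i < j`, and every vertex `v` satisfies
`d(v_i, v) ≤ k + 1 - i` for some `i`). Distances are `ℕ∞`-valued. -/
def IsBurningSeq {V : Type*} (G : SimpleGraph V) {k : ℕ} (s : Fin k → V) : Prop :=
  1 ≤ k ∧
  (∀ i j : Fin k, i < j → ((j.val - i.val + 1 : ℕ) : ℕ∞) ≤ G.edist (s i) (s j)) ∧
  (∀ v : V, ∃ i : Fin k, G.edist (s i) v ≤ ((k - i.val : ℕ) : ℕ∞))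

/-- The burning time function `λ(v) = min_{1 ≤ i ≤ k} (i + d(v_i, v))`. -/
noncomputable def burnTime {V : Type*} (G : SimpleGraph V) {k : ℕ} (s : Fin k → V)
    (v : V) : ℕ :=
  (⨅ i : Fin k, ((i.val + 1 : ℕ) : ℕ∞) + G.edist (s i) v).toNat

/-- The end time `T = max_{v ∈ V} λ(v)` of a burning. -/
noncomputable def endTime {V : Type*} [Fintype V] (G : SimpleGraph V) {k : ℕ}
    (s : Fin k → V) : ℕ :=
  Finset.univ.sup fun v => burnTime G s v

/-- Natural-number distance. -/
def dd (a b : ℕ) : ℕ := (a - b) + (b - a)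

lemma walk_len {n : ℕ} {v w : Fin n} (p : (pathG n).Walk v w) : dd v.val w.val ≤ p.length := by
  induction p with
  | nil => simp [dd]
  | cons h p ih =>
    rw [Walk.length_cons]; rcases h with h | h <;> simp only [dd] at * <;> omega

lemma pathG_edist_le {n : ℕ} : ∀ (m : ℕ) (v w : Fin n), dd v.val w.val ≤ m →
    (pathG n).edist v w ≤ (m : ℕ∞) := by
  intro m
  induction m with
  | zero =>
    intro v w h
    have : v = w := Fin.ext (by simp [dd] at h; omega)
    subst this; simp
  | succ m ih =>
    intro v w h
    rcases lt_trichotomy v.val w.val with hlt | heq | hgt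
    · have hv' : v.val + 1 < n := by omega
      set v' : Fin n := ⟨v.val + 1, hv'⟩ with hv'def
      have hadj : (pathG n).Adj v v' := Or.inl rfl
      have h1 : (pathG n).edist v v' ≤ 1 := le_of_eq (edist_eq_one_iff_adj.mpr hadj)
      have h2 : (pathG n).edist v' w ≤ (m : ℕ∞) := ih v' w (by have : v'.val = v.val + 1 := rfl; simp only [dd] at h ⊢; omega)
      calc (pathG n).edist v w ≤ (pathG n).edist v v' + (pathG n).edist v' w :=
            SimpleGraph.edist_triangle
        _ ≤ 1 + (m : ℕ∞) := add_le_add h1 h2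
        _ = ((m + 1 : ℕ) : ℕ∞) := by push_cast; ring
    · have : v = w := Fin.ext heq
      subst this; simp
    · have hw' : w.val + 1 < n := by omega
      set w' : Fin n := ⟨w.val + 1, hw'⟩
      have hadj : (pathG n).Adj w' w := Or.inr rfl
      have h1 : (pathG n).edist w' w ≤ 1 := le_of_eq (edist_eq_one_iff_adj.mpr hadj)
      have h2 : (pathG n).edist v w' ≤ (m : ℕ∞) := ih v w' (by have : w'.val = w.val + 1 := rfl; simp only [dd] at h ⊢; omega)
      calc (pathG n).edist v w ≤ (pathG n).edist v w' + (pathG n).edist w' w :=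
            SimpleGraph.edist_triangle
        _ ≤ (m : ℕ∞) + 1 := add_le_add h2 h1
        _ = ((m + 1 : ℕ) : ℕ∞) := by push_cast; ring

lemma pathG_edist {n : ℕ} (v w : Fin n) :
    (pathG n).edist v w = (dd v.val w.val : ℕ∞) := by
  refine le_antisymm (pathG_edist_le _ v w le_rfl) ?_
  rcases eq_or_ne ((pathG n).edist v w) ⊤ with h | h
  · exact (h ▸ le_top)
  · obtain ⟨p, hp⟩ := exists_walk_of_edist_ne_top h
    rw [← hp]
    exact_mod_cast walk_len p

lemma burnTime_spec {n k : ℕ} (hk : 1 ≤ k) (s : Fin k → Fin n) (v : Fin n) :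
    ∃ i0 : Fin k,
      (∀ i : Fin k, i0.val + 1 + dd (s i0).val v.val ≤ i.val + 1 + dd (s i).val v.val) ∧
      burnTime (pathG n) s v = i0.val + 1 + dd (s i0).val v.val := by
  haveI : Nonempty (Fin k) := ⟨⟨0, hk⟩⟩
  obtain ⟨i0, -, hmin⟩ := Finset.exists_min_image Finset.univ
    (fun i : Fin k => i.val + 1 + dd (s i).val v.val) ⟨Classical.arbitrary _, Finset.mem_univ _⟩
  refine ⟨i0, fun i => hmin i (Finset.mem_univ i), ?_⟩
  have heq : (⨅ i : Fin k, ((i.val + 1 : ℕ) : ℕ∞) + (pathG n).edist (s i) v)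
      = ((i0.val + 1 + dd (s i0).val v.val : ℕ) : ℕ∞) := by
    apply le_antisymm
    · refine iInf_le_of_le i0 ?_
      rw [pathG_edist]; push_cast; exact le_rfl
    · refine le_iInf fun i => ?_
      rw [pathG_edist]
      exact_mod_cast hmin i (Finset.mem_univ i)
  rw [burnTime, heq, ENat.toNat_coe]

lemma burnTime_lip {n k : ℕ} (hk : 1 ≤ k) (s : Fin k → Fin n) (v w : Fin n) :
    burnTime (pathG n) s v ≤ burnTime (pathG n) s w + dd v.val w.val := by
  obtain ⟨i0, hmin, hv⟩ := burnTime_spec hk s v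
  obtain ⟨j0, -, hw⟩ := burnTime_spec hk s w
  have h1 := hmin j0
  rw [hv, hw]
  simp only [dd] at *
  omega

/-- The sources for the construction on `P_{3k-2}`. -/
def srcs (k : ℕ) : Fin k → Fin (3 * k - 2) :=
  fun i => ⟨3 * (k - 1 - i.val), by have := i.isLt; omega⟩

/-- Fix `k ≥ 1`. The minimum `n` for which `P_n` admits a burning
sequence with exactly `k` sources whose burning is a burning homomorphism equals
`3k - 2`: `P_{3k-2}` admits such a burning sequence, and no `P_n` with `n < 3k - 2`
does. -/
theorem stmt_13 (k : ℕ) (hk : 1 ≤ k) :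
    (∃ s : Fin k → Fin (3 * k - 2), IsBurningSeq (pathG (3 * k - 2)) s ∧
      (∀ v w : Fin (3 * k - 2), (pathG (3 * k - 2)).Adj v w →
        burnTime (pathG (3 * k - 2)) s v ≠ burnTime (pathG (3 * k - 2)) s w)) ∧
    (∀ n : ℕ, n < 3 * k - 2 →
      ¬ ∃ s : Fin k → Fin n, IsBurningSeq (pathG n) s ∧
        (∀ v w : Fin n, (pathG n).Adj v w →
          burnTime (pathG n) s v ≠ burnTime (pathG n) s w)) := by
  constructor
  · refine ⟨srcs k, ⟨hk, ?_, ?_⟩, ?_⟩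
    · -- separation
      intro i j hij
      have hij' : i.val < j.val := hij
      have hi := i.isLt
      have hj := j.isLt
      rw [pathG_edist]
      refine Nat.cast_le.mpr ?_
      show j.val - i.val + 1 ≤ dd (3 * (k - 1 - i.val)) (3 * (k - 1 - j.val))
      simp only [dd]; omega
    · -- coverage
      intro v
      have hv := v.isLt
      refine ⟨⟨(2 * k - 2 - v.val) / 2, by omega⟩, ?_⟩
      rw [pathG_edist]
      refine Nat.cast_le.mpr ?_
      show dd (3 * (k - 1 - (2 * k - 2 - v.val) / 2)) v.val ≤ k - (2 * k - 2 - v.val) / 2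
      simp only [dd]; omega
    · -- homomorphism
      have hpar : ∀ v : Fin (3 * k - 2),
          burnTime (pathG (3 * k - 2)) (srcs k) v % 2 = (k + v.val) % 2 := by
        intro v
        obtain ⟨i0, -, hv⟩ := burnTime_spec hk (srcs k) v
        rw [hv]
        have hi0 := i0.isLt
        have hvv := v.isLt
        show (i0.val + 1 + dd (3 * (k - 1 - i0.val)) v.val) % 2 = (k + v.val) % 2
        simp only [dd]; omega
      intro v w hadj heq
      have h1 := hpar v
      have h2 := hpar w
      rcases hadj with h | h <;> omega
  · -- lower bound
    rintro n hnk ⟨s, ⟨-, hsep, hcov⟩, hhom⟩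
    have hn1 : 0 < n := (s ⟨0, hk⟩).isLt.trans_le' (Nat.zero_le _) |>.trans_le le_rfl
    have hsep' : ∀ i j : Fin k, i < j → j.val - i.val + 1 ≤ dd (s i).val (s j).val := by
      intro i j hij
      have := hsep i j hij
      rw [pathG_edist] at this
      exact_mod_cast this
    set L : Fin n → ℕ := fun v => burnTime (pathG n) s v with hL
    -- parity invariant along the path
    have key : ∀ (m : ℕ) (hm : m < n), (L ⟨m, hm⟩ + m) % 2 = L ⟨0, hn1⟩ % 2 := by
      intro m
      induction m with
      | zero => intro hm; simp
      | succ m ih =>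
        intro hm
        have hm' : m < n := by omega
        have hadj : (pathG n).Adj ⟨m, hm'⟩ ⟨m + 1, hm⟩ := Or.inl rfl
        have hne := hhom _ _ hadj
        have hl1 := burnTime_lip hk s ⟨m, hm'⟩ ⟨m + 1, hm⟩
        have hl2 := burnTime_lip hk s ⟨m + 1, hm⟩ ⟨m, hm'⟩
        have hih := ih hm'
        simp only [dd, hL] at *
        omega
    -- burn time at a source i is i+1
    have hLsrc : ∀ i : Fin k, L (s i) = i.val + 1 := by
      intro i
      obtain ⟨j0, hmin, hv⟩ := burnTime_spec hk s (s i)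
      have hself : dd (s i).val (s i).val = 0 := by simp [dd]
      have hmi := hmin i
      rw [hself] at hmi
      rw [hL]; simp only []; rw [hv]
      rcases lt_trichotomy j0 i with h | h | h
      · have hji : j0.val < i.val := h
        have := hsep' j0 i h
        omega
      · subst h; omega
      · have hji : i.val < j0.val := h
        omega
    -- parity of source positions
    have hsrcpar : ∀ i : Fin k, (i.val + 1 + (s i).val) % 2 = L ⟨0, hn1⟩ % 2 := by
      intro i
      have := key (s i).val (s i).isLt
      rw [Fin.eta] at this
      rw [← hLsrc i]
      exact this
    -- pairwise distance ≥ 3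
    have hpair : ∀ i j : Fin k, i ≠ j → 3 ≤ dd (s i).val (s j).val := by
      intro i j hne
      rcases lt_or_gt_of_ne hne with h | h
      · have hij : i.val < j.val := h
        have h1 := hsep' i j h
        have h2 := hsrcpar i
        have h3 := hsrcpar j
        simp only [dd] at *
        omega
      · have hij : j.val < i.val := h
        have h1 := hsep' j i h
        have h2 := hsrcpar i
        have h3 := hsrcpar j
        simp only [dd] at *
        omega
    -- pack into injectivity
    have hF : Function.Injective (fun p : Fin k × Fin 3 =>
        (⟨(s p.1).val + p.2.val, by have := (s p.1).isLt; have := p.2.isLt; omega⟩ : Fin (n + 2))) := by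
      rintro ⟨i, t⟩ ⟨j, u⟩ hij
      simp only [Fin.mk.injEq] at hij
      have ht := t.isLt
      have hu := u.isLt
      have hij' : i = j := by
        by_contra hne
        have := hpair i j hne
        simp only [dd] at this
        omega
      subst hij'
      have : t = u := Fin.ext (by omega)
      subst this; rfl
    have hcard := Fintype.card_le_of_injective _ hF
    simp [Fintype.card_prod] at hcard
    omega
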